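/- Restricted symmetry action on the modified plaquette operator: for a square face f with corner vertices v ∈ f and boundary edges e ∈ f, and for every subset S of the corner vertices of f, (∏_{v∈S} τ^x_v) · 𝑩̃_f · (∏_{v∈S} τ^x_v) = (∏_{v∈S} ∏_{e∈f, e∋v} i·g(e,v)·σ^x_e) · 𝑩̃_f, where g(e,v) = +1 if v = ∂₁e and g(e,v) = −1 if v = ∂₀e. Moreover τ^x_v·𝑸̃_v·τ^x_v = 𝑸̃_v and A_v is fixed, so a symmetry action restricted to any subset of vertex qubits fixes all A_v and 𝑸̃_v. -/

import Mathlib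

open Complex Matrix

noncomputable section

/-- The operator acting as the 2×2 matrix `M` on the qubit at site `j` of a finite qubit
system and as the identity on all other sites. -/
def localOp {S : Type*} [Fintype S] [DecidableEq S] (j : S)
    (M : Matrix (Fin 2) (Fin 2) ℂ) :
    Matrix (S → Fin 2) (S → Fin 2) ℂ :=
  Matrix.of fun f g => if ∀ k, k ≠ j → f k = g k then M (f j) (g j) else 0

/-- The Pauli `X` matrix. -/
def PX : Matrix (Fin 2) (Fin 2) ℂ := !![0, 1; 1, 0]

/-- The Pauli `Z` matrix. -/
def PZ : Matrix (Fin 2) (Fin 2) ℂ := !![1, 0; 0, -1]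

section LocalOpLemmas

variable {S : Type*} [Fintype S] [DecidableEq S]

theorem localOp_mul_same (j : S) (M N : Matrix (Fin 2) (Fin 2) ℂ) :
    localOp j M * localOp j N = localOp j (M * N) := by
  ext f g
  simp only [localOp, Matrix.mul_apply, Matrix.of_apply]
  have hfin2 : ∀ x : Fin 2, x = 0 ∨ x = 1 := by decide
  by_cases hfg : ∀ k, k ≠ j → f k = g k
  · rw [if_pos hfg]
    have h01 : Function.update f j 0 ≠ Function.update f j 1 := by
      intro h
      have := congrFun h j
      simp at this
    have hsub : ({Function.update f j 0, Function.update f j 1} : Finset (S → Fin 2)) ⊆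
        Finset.univ := Finset.subset_univ _
    have hval : ∀ x : Fin 2,
        (if ∀ k, k ≠ j → f k = Function.update f j x k then M (f j) (Function.update f j x j) else 0) *
          (if ∀ k, k ≠ j → Function.update f j x k = g k then N (Function.update f j x j) (g j) else 0)
        = M (f j) x * N x (g j) := by
      intro x
      rw [if_pos, if_pos, Function.update_self]
      · intro k hk; rw [Function.update_of_ne hk]; exact hfg k hk
      · intro k hk; rw [Function.update_of_ne hk]
    rw [← Finset.sum_subset hsub ?hz]
    · rw [Finset.sum_insert (by simp [h01]), Finset.sum_singleton, hval 0, hval 1]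
      simp [Fin.sum_univ_two]
    · intro h _ hnot
      by_cases c1 : ∀ k, k ≠ j → f k = h k
      · by_cases c2 : ∀ k, k ≠ j → h k = g k
        · exfalso
          apply hnot
          have hh : h = Function.update f j (h j) := by
            funext m
            by_cases hm : m = j
            · subst hm; simp
            · rw [Function.update_of_ne hm]; exact (c1 m hm).symm
          rcases hfin2 (h j) with h0 | h0 <;> rw [h0] at hh <;> simp [hh]
        · rw [if_neg c2, mul_zero]
      · rw [if_neg c1, zero_mul]
  · rw [if_neg hfg]
    apply Finset.sum_eq_zero
    intro h _
    by_cases c1 : ∀ k, k ≠ j → f k = h k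
    · by_cases c2 : ∀ k, k ≠ j → h k = g k
      · exact absurd (fun k hk => (c1 k hk).trans (c2 k hk)) hfg
      · rw [if_neg c2, mul_zero]
    · rw [if_neg c1, zero_mul]

theorem localOp_mul_apply_ne {j k : S} (hjk : j ≠ k) (M N : Matrix (Fin 2) (Fin 2) ℂ)
    (f g : S → Fin 2) :
    (localOp j M * localOp k N) f g =
      if ∀ l, l ≠ j → l ≠ k → f l = g l then M (f j) (g j) * N (f k) (g k) else 0 := by
  rw [Matrix.mul_apply]
  rw [Finset.sum_eq_single (Function.update f j (g j))]
  · simp only [localOp, Matrix.of_apply]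
    have c1 : ∀ m, m ≠ j → f m = Function.update f j (g j) m := fun m hm =>
      (Function.update_of_ne hm _ _).symm
    rw [if_pos c1, Function.update_self, Function.update_of_ne (Ne.symm hjk)]
    by_cases hc : ∀ l, l ≠ j → l ≠ k → f l = g l
    · rw [if_pos hc, if_pos]
      intro m hm
      by_cases hmj : m = j
      · subst hmj; simp
      · rw [Function.update_of_ne hmj]; exact hc m hmj hm
    · rw [if_neg hc, if_neg, mul_zero]
      intro hcon
      apply hc; intro l hlj hlk
      have := hcon l hlk
      rwa [Function.update_of_ne hlj] at this
  · intro h _ hne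
    simp only [localOp, Matrix.of_apply]
    by_cases c1 : ∀ m, m ≠ j → f m = h m
    · by_cases c2 : ∀ m, m ≠ k → h m = g m
      · exfalso
        apply hne
        funext m
        by_cases hmj : m = j
        · rw [hmj, Function.update_self]; exact c2 j hjk
        · rw [Function.update_of_ne hmj]; exact (c1 m hmj).symm
      · rw [if_neg c2, mul_zero]
    · rw [if_neg c1, zero_mul]
  · intro habs; exact absurd (Finset.mem_univ _) habs

theorem localOp_comm {j k : S} (hjk : j ≠ k) (M N : Matrix (Fin 2) (Fin 2) ℂ) :
    localOp j M * localOp k N = localOp k N * localOp j M := by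
  ext f g
  rw [localOp_mul_apply_ne hjk, localOp_mul_apply_ne hjk.symm]
  by_cases hc : ∀ l, l ≠ j → l ≠ k → f l = g l
  · rw [if_pos hc, if_pos (fun l h1 h2 => hc l h2 h1), mul_comm]
  · rw [if_neg hc, if_neg (fun hcon => hc (fun l h1 h2 => hcon l h2 h1))]

theorem localOp_one (j : S) : localOp j (1 : Matrix (Fin 2) (Fin 2) ℂ) = 1 := by
  ext f g
  simp only [localOp, Matrix.of_apply, Matrix.one_apply]
  by_cases hfg : f = g
  · subst hfg
    simp
  · rw [if_neg hfg]
    by_cases h1 : ∀ k, k ≠ j → f k = g k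
    · rw [if_pos h1, if_neg]
      intro h2
      exact hfg (funext fun m => by
        by_cases hm : m = j
        · rw [hm]; exact h2
        · exact h1 m hm)
    · rw [if_neg h1]

theorem localOp_smul (j : S) (a : ℂ) (M : Matrix (Fin 2) (Fin 2) ℂ) :
    localOp j (a • M) = a • localOp j M := by
  ext f g
  simp only [localOp, Matrix.of_apply, Matrix.smul_apply, smul_eq_mul, mul_ite, mul_zero]

theorem localOp_neg (j : S) (M : Matrix (Fin 2) (Fin 2) ℂ) :
    localOp j (-M) = -localOp j M := by
  rw [← neg_one_smul ℂ M, localOp_smul, neg_one_smul]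

theorem PX_mul_PX : PX * PX = 1 := by
  ext i j
  fin_cases i <;> fin_cases j <;>
    norm_num [PX, Matrix.mul_apply, Fin.sum_univ_two, Matrix.one_apply]

theorem PZ_mul_PZ : PZ * PZ = 1 := by
  ext i j
  fin_cases i <;> fin_cases j <;>
    norm_num [PZ, Matrix.mul_apply, Fin.sum_univ_two, Matrix.one_apply]

theorem PX_PZ_PX : PX * PZ * PX = -PZ := by
  ext i j
  fin_cases i <;> fin_cases j <;>
    norm_num [PX, PZ, Matrix.mul_apply, Fin.sum_univ_two, Matrix.neg_apply]

section ExpLemmas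

open NormedSpace

variable {m : Type*} [Fintype m] [DecidableEq m]

theorem exp_smul_one_eq (a : ℂ) :
    NormedSpace.exp (a • (1 : Matrix m m ℂ)) = Complex.exp a • (1 : Matrix m m ℂ) := by
  letI : SeminormedRing (Matrix m m ℂ) := Matrix.linftyOpSemiNormedRing
  letI : NormedRing (Matrix m m ℂ) := Matrix.linftyOpNormedRing
  letI : NormedAlgebra ℂ (Matrix m m ℂ) := Matrix.linftyOpNormedAlgebra
  have h1 : a • (1 : Matrix m m ℂ) = algebraMap ℂ (Matrix m m ℂ) a :=
    (Algebra.algebraMap_eq_smul_one a).symm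
  have h2 : Complex.exp a • (1 : Matrix m m ℂ) = algebraMap ℂ (Matrix m m ℂ) (Complex.exp a) :=
    (Algebra.algebraMap_eq_smul_one _).symm
  rw [h1, h2, Complex.exp_eq_exp_ℂ]
  exact (algebraMap_exp_comm a).symm

theorem exp_smul_idem (P : Matrix m m ℂ) (h : P * P = P) (μ : ℂ) :
    NormedSpace.exp (μ • P) = 1 + (Complex.exp μ - 1) • P := by
  letI : SeminormedRing (Matrix m m ℂ) := Matrix.linftyOpSemiNormedRing
  letI : NormedRing (Matrix m m ℂ) := Matrix.linftyOpNormedRing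
  letI : NormedAlgebra ℂ (Matrix m m ℂ) := Matrix.linftyOpNormedAlgebra
  have hpow : ∀ k : ℕ, (μ • P) ^ (k + 1) = μ ^ (k + 1) • P := by
    intro k
    rw [smul_pow, IsIdempotentElem.pow_succ_eq k h]
  have hsum : Summable (fun k : ℕ => ((Nat.factorial k : ℂ))⁻¹ • (μ • P) ^ k) :=
    expSeries_summable' (𝕂 := ℂ) (μ • P)
  have hsc : Summable (fun k : ℕ => (((Nat.factorial k : ℂ))⁻¹ • μ ^ k)) :=
    expSeries_summable' (𝕂 := ℂ) μ
  have hsc' : Summable (fun k : ℕ => (((Nat.factorial (k+1) : ℂ))⁻¹ * μ ^ (k+1))) := by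
    have := (summable_nat_add_iff (f := fun k : ℕ => (((Nat.factorial k : ℂ))⁻¹ • μ ^ k)) 1).2 hsc
    simpa [smul_eq_mul] using this
  rw [NormedSpace.exp_eq_tsum ℂ]
  show (∑' k : ℕ, ((Nat.factorial k : ℂ))⁻¹ • (μ • P) ^ k) = 1 + (Complex.exp μ - 1) • P
  rw [Summable.tsum_eq_zero_add hsum]
  have htail : ∑' k : ℕ, ((Nat.factorial (k+1) : ℂ))⁻¹ • (μ • P) ^ (k + 1)
      = (Complex.exp μ - 1) • P := by
    have : ∀ k : ℕ, ((Nat.factorial (k+1) : ℂ))⁻¹ • (μ • P) ^ (k + 1)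
        = (((Nat.factorial (k+1) : ℂ))⁻¹ * μ ^ (k + 1)) • P := by
      intro k; rw [hpow, smul_smul]
    rw [tsum_congr this, Summable.tsum_smul_const hsc']
    congr 1
    have hexp : Complex.exp μ = ∑' k : ℕ, ((Nat.factorial k : ℂ))⁻¹ • μ ^ k := by
      rw [Complex.exp_eq_exp_ℂ, NormedSpace.exp_eq_tsum ℂ]
    rw [hexp, Summable.tsum_eq_zero_add hsc]
    simp [smul_eq_mul]
  rw [htail]
  simp

theorem exp_smul_invol (J : Matrix m m ℂ) (h : J * J = 1) (θ : ℂ) :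
    NormedSpace.exp (θ • J) = Complex.cosh θ • 1 + Complex.sinh θ • J := by
  set P : Matrix m m ℂ := (2 : ℂ)⁻¹ • (1 + J) with hP
  have hPP : P * P = P := by
    rw [hP, smul_mul_assoc, mul_smul_comm, smul_smul]
    rw [add_mul, one_mul, mul_add, mul_one, h]
    rw [show (1 : Matrix m m ℂ) + J + (J + 1) = (2 : ℂ) • (1 + J) by
      rw [two_smul]; abel]
    rw [smul_smul]
    norm_num
  have hdecomp : θ • J = (2 * θ) • P + (-θ) • (1 : Matrix m m ℂ) := by
    rw [hP]; module
  rw [hdecomp,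
    Matrix.exp_add_of_commute ((2 * θ) • P) ((-θ) • (1 : Matrix m m ℂ))
      (((Commute.one_right P).smul_right (-θ)).smul_left (2 * θ)),
    exp_smul_idem P hPP, exp_smul_one_eq, hP]
  rw [mul_smul_comm, mul_one]
  have hne : Complex.exp θ ≠ 0 := Complex.exp_ne_zero θ
  have e2 : Complex.exp (2 * θ) = Complex.exp θ * Complex.exp θ := by
    rw [two_mul, Complex.exp_add]
  have eneg : Complex.exp (-θ) = (Complex.exp θ)⁻¹ := Complex.exp_neg θ
  simp only [Complex.cosh, Complex.sinh]
  match_scalars <;> simp only [e2, eneg] <;> field_simp <;> ring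

theorem exp_flip_pos (J : Matrix m m ℂ) (h : J * J = 1) :
    NormedSpace.exp ((((Real.pi : ℂ) * Complex.I) / 2) • J) = Complex.I • J := by
  rw [exp_smul_invol J h]
  have h1 : ((Real.pi : ℂ) * Complex.I) / 2 = ((Real.pi / 2 : ℝ) : ℂ) * Complex.I := by
    push_cast; ring
  rw [h1, Complex.cosh_mul_I, Complex.sinh_mul_I, ← Complex.ofReal_cos, ← Complex.ofReal_sin,
    Real.cos_pi_div_two, Real.sin_pi_div_two]
  simp

theorem exp_flip_neg (J : Matrix m m ℂ) (h : J * J = 1) :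
    NormedSpace.exp ((-((Real.pi : ℂ) * Complex.I) / 2) • J) = (-Complex.I) • J := by
  rw [exp_smul_invol J h]
  have h1 : -((Real.pi : ℂ) * Complex.I) / 2 = ((-(Real.pi / 2) : ℝ) : ℂ) * Complex.I := by
    push_cast; ring
  rw [h1, Complex.cosh_mul_I, Complex.sinh_mul_I, ← Complex.ofReal_cos, ← Complex.ofReal_sin,
    Real.cos_neg, Real.sin_neg, Real.cos_pi_div_two, Real.sin_pi_div_two]
  simp

end ExpLemmas

theorem comm_swap {R : Type*} [Semigroup R] {x y : R} (h : Commute x y) (z : R) :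
    x * (y * z) = y * (x * z) := by
  rw [← mul_assoc, h.eq, mul_assoc]

theorem prod_four_invol {R : Type*} [Monoid R] {a b c d : R}
    (hab : Commute a b) (hac : Commute a c) (had : Commute a d)
    (hbc : Commute b c) (hbd : Commute b d) (hcd : Commute c d)
    (ha : a * a = 1) (hb : b * b = 1) (hc : c * c = 1) (hd : d * d = 1) :
    a * b * c * d * (a * b * c * d) = 1 := by
  simp only [mul_assoc]
  rw [comm_swap had.symm, comm_swap hac.symm, comm_swap hab.symm,
    ← mul_assoc a a, ha, one_mul,
    comm_swap hbd.symm, comm_swap hbc.symm, ← mul_assoc b b, hb, one_mul,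
    comm_swap hcd.symm, ← mul_assoc c c, hc, one_mul, hd]

theorem invol_pair {R : Type*} [Monoid R] {t a : R} (h : a * t = t * a) (htt : t * t = 1)
    (b : R) : (t * a) * (t * b) = a * b := by
  calc (t * a) * (t * b) = t * ((a * t) * b) := by simp only [mul_assoc]
    _ = t * ((t * a) * b) := by rw [h]
    _ = (t * t) * (a * b) := by simp only [mul_assoc]
    _ = a * b := by rw [htt, one_mul]

theorem invol_pair' {R : Type*} [Monoid R] {t a : R} (h : a * t = t * a) (htt : t * t = 1)
    (b c : R) : (t * a) * ((t * b) * c) = a * (b * c) := by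
  rw [← mul_assoc, invol_pair h htt, mul_assoc]

theorem conj_list {R : Type*} [Monoid R] (φ Dm : Fin 4 → R) (B : R)
    (hφφ : ∀ i j, Commute (φ i) (φ j))
    (hφD : ∀ i j, Commute (φ i) (Dm j))
    (hDD : ∀ i j, Commute (Dm i) (Dm j))
    (hcase : ∀ j, φ j * B * φ j = Dm j * B) :
    ∀ l : List (Fin 4), (l.map φ).prod * B * (l.map φ).prod = (l.map Dm).prod * B := by
  intro l
  induction l with
  | nil => simp
  | cons j t ih =>
    simp only [List.map_cons, List.prod_cons]
    have hφt : Commute (φ j) ((t.map φ).prod) :=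
      Commute.list_prod_right _ _ (by
        intro y hy
        obtain ⟨i, _, rfl⟩ := List.mem_map.1 hy
        exact hφφ j i)
    have hφDt : Commute (φ j) ((t.map Dm).prod) :=
      Commute.list_prod_right _ _ (by
        intro y hy
        obtain ⟨i, _, rfl⟩ := List.mem_map.1 hy
        exact hφD j i)
    have hDDt : Commute (Dm j) ((t.map Dm).prod) :=
      Commute.list_prod_right _ _ (by
        intro y hy
        obtain ⟨i, _, rfl⟩ := List.mem_map.1 hy
        exact hDD j i)
    calc (φ j * (t.map φ).prod) * B * (φ j * (t.map φ).prod)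
        = φ j * ((t.map φ).prod * (B * (φ j * (t.map φ).prod))) := by simp only [mul_assoc]
      _ = φ j * ((t.map φ).prod * (B * ((t.map φ).prod * φ j))) := by rw [hφt.eq]
      _ = φ j * (((t.map φ).prod * B * (t.map φ).prod) * φ j) := by simp only [mul_assoc]
      _ = φ j * (((t.map Dm).prod * B) * φ j) := by rw [ih]
      _ = φ j * ((t.map Dm).prod * (B * φ j)) := by simp only [mul_assoc]
      _ = (t.map Dm).prod * (φ j * (B * φ j)) := by rw [comm_swap hφDt]
      _ = (t.map Dm).prod * (φ j * B * φ j) := by simp only [mul_assoc]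
      _ = (t.map Dm).prod * (Dm j * B) := by rw [hcase j]
      _ = ((t.map Dm).prod * Dm j) * B := by simp only [mul_assoc]
      _ = (Dm j * (t.map Dm).prod) * B := by rw [hDDt.eq]

end LocalOpLemmas


/-! A finite (boundary-free) patch of the square lattice ℤ²: the discrete torus `(ℤ/n)²`,
with one qubit on each vertex and one on each edge.  Each edge is oriented in the standard
way: horizontal edges from left to right, vertical edges from bottom to top, so `∂₀e` is the
base point of `e` and `∂₁e` the other endpoint. -/

/-- Vertices of the lattice. -/
abbrev TV (n : ℕ) := ZMod n × ZMod n

/-- Edges: `(a, true)` is the horizontal edge based at `a`, `(a, false)` the vertical one. -/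
abbrev TE (n : ℕ) := (ZMod n × ZMod n) × Bool

/-- Operators on the vertex and edge qubits of the lattice. -/
abbrev TOp (n : ℕ) [NeZero n] :=
  Matrix ((TV n ⊕ TE n) → Fin 2) ((TV n ⊕ TE n) → Fin 2) ℂ

variable (n : ℕ) [NeZero n]

/-- `τ^x_v`. -/ def tx (v : TV n) : TOp n := localOp (Sum.inl v) PX
/-- `τ^z_v`. -/ def tz (v : TV n) : TOp n := localOp (Sum.inl v) PZ
/-- `σ^x_e`. -/ def sx (e : TE n) : TOp n := localOp (Sum.inr e) PX
/-- `σ^z_e`. -/ def sz (e : TE n) : TOp n := localOp (Sum.inr e) PZ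

/-- `∂₀e`, the initial vertex of the edge `e` (standard orientation). -/
def d0 (e : TE n) : TV n := e.1

/-- `∂₁e`, the final vertex of the edge `e` (standard orientation). -/
def d1 (e : TE n) : TV n :=
  if e.2 then (e.1.1 + 1, e.1.2) else (e.1.1, e.1.2 + 1)

/-- The four edges meeting the vertex `v`: right, up, left, down. -/
def starE (v : TV n) : Fin 4 → TE n :=
  ![(v, true), (v, false), ((v.1 - 1, v.2), true), ((v.1, v.2 - 1), false)]

/-- The star operator `A_v := ∏_{e∋v} σ^x_e`. -/
def Av (v : TV n) : TOp n :=
  ((List.finRange 4).map fun k => sx n (starE n v k)).prod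

/-- `Q_v := τ^x_v · i^{−τ^z_v·∑_{e∋v} f(e,v)σ^x_e/2}`, where `f(e,v) = +1` if `v = ∂₀e`
and `f(e,v) = −1` if `v = ∂₁e`. -/
def Qv (v : TV n) : TOp n :=
  tx n v * NormedSpace.exp ((-((Real.pi : ℂ) * Complex.I) / 4) •
    (tz n v * (sx n (starE n v 0) + sx n (starE n v 1)
      - sx n (starE n v 2) - sx n (starE n v 3))))

/-- `𝑸̃_v := ((1+A_v)/2)·Q_v`. -/
def Qtv (v : TV n) : TOp n := ((2 : ℂ)⁻¹ • ((1 : TOp n) + Av n v)) * Qv n v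

/-- The four boundary edges of the face with lower-left corner `f`:
bottom, right, top, left; the boundary edge with index `k` joins the corners with indices
`k` and `k+1` (cyclically). -/
def bdryE (f : TV n) : Fin 4 → TE n :=
  ![(f, true), ((f.1 + 1, f.2), false), ((f.1, f.2 + 1), true), (f, false)]

/-- The four corner vertices of the face with lower-left corner `f`. -/
def cnr (f : TV n) : Fin 4 → TV n :=
  ![f, (f.1 + 1, f.2), (f.1 + 1, f.2 + 1), (f.1, f.2 + 1)]

/-- The plaquette operator `B_f := ∏_{e∈f} σ^z_e`. -/
def Bf (f : TV n) : TOp n :=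
  ((List.finRange 4).map fun k => sz n (bdryE n f k)).prod

/-- The modified plaquette operator
`𝑩̃_f := i^{−∑_{e∈f} σ^x_e(τ^z_{∂₁e} − τ^z_{∂₀e})/2}·B_f`. -/
def Btf (f : TV n) : TOp n :=
  NormedSpace.exp ((-((Real.pi : ℂ) * Complex.I) / 4) •
      (∑ k : Fin 4, sx n (bdryE n f k) *
        (tz n (d1 n (bdryE n f k)) - tz n (d0 n (bdryE n f k))))) * Bf n f

/-- The sign `g(e,v)`: `+1` if `v = ∂₁e` and `−1` if `v = ∂₀e`. -/
def gsgn (e : TE n) (v : TV n) : ℂ := if d1 n e = v then 1 else -1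

/-- The restricted spin flip `∏_{v∈S} τ^x_v` over a subset `S` of the corners of the
face `f`. -/
def GfaceS (f : TV n) (S : Finset (Fin 4)) : TOp n :=
  (((List.finRange 4).filter (fun j => j ∈ S)).map fun j => tx n (cnr n f j)).prod

/-- The decoration `∏_{v∈S} ∏_{e∈f, e∋v} i·g(e,v)·σ^x_e` produced by the restricted
symmetry: the corner with index `j` lies on the two boundary edges with indices `j−1`
and `j`. -/
def decoration (f : TV n) (S : Finset (Fin 4)) : TOp n :=
  (((List.finRange 4).filter (fun j => j ∈ S)).map fun j =>
    ((Complex.I * gsgn n (bdryE n f (j - 1)) (cnr n f j)) • sx n (bdryE n f (j - 1))) *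
      ((Complex.I * gsgn n (bdryE n f j) (cnr n f j)) • sx n (bdryE n f j))).prod

/-! ### Basic commutation and involution lemmas for the lattice operators -/

theorem tx_mul_tx (v : TV n) : tx n v * tx n v = 1 := by
  rw [tx, localOp_mul_same, PX_mul_PX, localOp_one]

theorem tx_tz_tx_same (v : TV n) : tx n v * tz n v * tx n v = -tz n v := by
  rw [tx, tz, localOp_mul_same, localOp_mul_same, PX_PZ_PX, localOp_neg]

theorem comm_tx_sx (v : TV n) (e : TE n) : Commute (tx n v) (sx n e) :=
  localOp_comm (by simp) PX PX

theorem comm_tx_sz (v : TV n) (e : TE n) : Commute (tx n v) (sz n e) :=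
  localOp_comm (by simp) PX PZ

theorem comm_tz_sx (v : TV n) (e : TE n) : Commute (tz n v) (sx n e) :=
  localOp_comm (by simp) PZ PX

theorem comm_sx_tz (e : TE n) (v : TV n) : Commute (sx n e) (tz n v) :=
  (comm_tz_sx n v e).symm

theorem comm_tx_tx (v w : TV n) : Commute (tx n v) (tx n w) := by
  rcases eq_or_ne v w with rfl | h
  · exact Commute.refl _
  · exact localOp_comm (by simp [h]) PX PX

theorem comm_sx_sx (e e' : TE n) : Commute (sx n e) (sx n e') := by
  rcases eq_or_ne e e' with rfl | h
  · exact Commute.refl _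
  · exact localOp_comm (by simp [h]) PX PX

theorem comm_tz_tz (v w : TV n) : Commute (tz n v) (tz n w) := by
  rcases eq_or_ne v w with rfl | h
  · exact Commute.refl _
  · exact localOp_comm (by simp [h]) PZ PZ

theorem comm_tx_tz_ne {v w : TV n} (h : v ≠ w) : Commute (tx n v) (tz n w) :=
  localOp_comm (by simp [h]) PX PZ

theorem tx_tz_tx_ne {v w : TV n} (h : v ≠ w) : tx n v * tz n w * tx n v = tz n w := by
  rw [(comm_tx_tz_ne n h).eq, mul_assoc, tx_mul_tx, mul_one]

theorem sz_mul_sz (e : TE n) : sz n e * sz n e = 1 := by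
  rw [sz, localOp_mul_same, PZ_mul_PZ, localOp_one]

theorem Av_eq (v : TV n) : Av n v =
    sx n (starE n v 0) * sx n (starE n v 1) * sx n (starE n v 2) * sx n (starE n v 3) := by
  rw [Av, show List.finRange 4 = [0, 1, 2, 3] from by decide]
  simp [mul_assoc]

theorem Bf_eq (f : TV n) : Bf n f =
    sz n (bdryE n f 0) * sz n (bdryE n f 1) * sz n (bdryE n f 2) * sz n (bdryE n f 3) := by
  rw [Bf, show List.finRange 4 = [0, 1, 2, 3] from by decide]
  simp [mul_assoc]

theorem comm_tx_Av (v w : TV n) : Commute (tx n v) (Av n w) := by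
  rw [Av_eq]
  exact (((((comm_tx_sx n v _).mul_right (comm_tx_sx n v _))).mul_right
    (comm_tx_sx n v _)).mul_right (comm_tx_sx n v _))

theorem comm_tx_Bf (v : TV n) (f : TV n) : Commute (tx n v) (Bf n f) := by
  rw [Bf_eq]
  exact (((((comm_tx_sz n v _).mul_right (comm_tx_sz n v _))).mul_right
    (comm_tx_sz n v _)).mul_right (comm_tx_sz n v _))

theorem sx_mul_sx (e : TE n) : sx n e * sx n e = 1 := by
  rw [sx, localOp_mul_same, PX_mul_PX, localOp_one]

theorem tz_mul_tz_self (v : TV n) : tz n v * tz n v = 1 := by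
  rw [tz, localOp_mul_same, PZ_mul_PZ, localOp_one]

theorem Av_mul_Av (v : TV n) : Av n v * Av n v = 1 := by
  rw [Av_eq]
  exact prod_four_invol (comm_sx_sx n _ _) (comm_sx_sx n _ _) (comm_sx_sx n _ _)
    (comm_sx_sx n _ _) (comm_sx_sx n _ _) (comm_sx_sx n _ _)
    (sx_mul_sx n _) (sx_mul_sx n _) (sx_mul_sx n _) (sx_mul_sx n _)

theorem hcK (v : TV n) (e e' : TE n) :
    Commute (tz n v * sx n e) (tz n v * sx n e') :=
  Commute.mul_left ((Commute.refl (tz n v)).mul_right (comm_tz_sx n v e'))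
    (((comm_tz_sx n v e).symm).mul_right (comm_sx_sx n e e'))

theorem hKsq (v : TV n) (e : TE n) :
    (tz n v * sx n e) * (tz n v * sx n e) = 1 := by
  rw [invol_pair (comm_sx_tz n e v).eq (tz_mul_tz_self n v), sx_mul_sx]

theorem exp_two_smul_Qarg (v : TV n) :
    NormedSpace.exp (((2 : ℂ) * (-((Real.pi : ℂ) * Complex.I) / 4)) •
      (tz n v * (sx n (starE n v 0) + sx n (starE n v 1)
        - sx n (starE n v 2) - sx n (starE n v 3)))) = Av n v := by
  set t := tz n v with ht
  set s0 := sx n (starE n v 0) with hs0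
  set s1 := sx n (starE n v 1) with hs1
  set s2 := sx n (starE n v 2) with hs2
  set s3 := sx n (starE n v 3) with hs3
  have hexpand : t * (s0 + s1 - s2 - s3) = ((t * s0 + t * s1) - t * s2) - t * s3 := by
    rw [mul_sub, mul_sub, mul_add]
  have hexp4 : ((2 : ℂ) * (-((Real.pi : ℂ) * Complex.I) / 4)) •
      (t * (s0 + s1 - s2 - s3)) =
      (-((Real.pi : ℂ) * Complex.I) / 2) • (t * s0) +
        ((-((Real.pi : ℂ) * Complex.I) / 2) • (t * s1) +
          ((((Real.pi : ℂ) * Complex.I) / 2) • (t * s2) +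
            (((Real.pi : ℂ) * Complex.I) / 2) • (t * s3))) := by
    rw [hexpand]
    match_scalars <;> ring
  rw [hexp4]
  have c01 : Commute (t * s0) (t * s1) := hcK n v _ _
  have c02 : Commute (t * s0) (t * s2) := hcK n v _ _
  have c03 : Commute (t * s0) (t * s3) := hcK n v _ _
  have c12 : Commute (t * s1) (t * s2) := hcK n v _ _
  have c13 : Commute (t * s1) (t * s3) := hcK n v _ _
  have c23 : Commute (t * s2) (t * s3) := hcK n v _ _
  rw [Matrix.exp_add_of_commute _ _
    ((((c01.smul_right _).add_right
      ((c02.smul_right _).add_right (c03.smul_right _))).smul_left _))]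
  rw [Matrix.exp_add_of_commute _ _
    ((((c12.smul_right _).add_right (c13.smul_right _)).smul_left _))]
  rw [Matrix.exp_add_of_commute _ _ ((c23.smul_right _).smul_left _)]
  rw [exp_flip_neg _ (hKsq n v _), exp_flip_neg _ (hKsq n v _),
    exp_flip_pos _ (hKsq n v _), exp_flip_pos _ (hKsq n v _)]
  rw [Av_eq]
  have htt : t * t = 1 := tz_mul_tz_self n v
  have h23 : (t * s2) * (t * s3) = s2 * s3 :=
    invol_pair (comm_sx_tz n (starE n v 2) v).eq htt s3
  have h01 : (t * s0) * ((t * s1) * (s2 * s3)) = s0 * (s1 * (s2 * s3)) :=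
    invol_pair' (comm_sx_tz n (starE n v 0) v).eq htt s1 (s2 * s3)
  simp only [smul_mul_assoc, mul_smul_comm, smul_smul]
  rw [h23, h01]
  simp only [mul_assoc]
  match_scalars
  simp [Complex.I_mul_I]

theorem tx_Qtv_tx (v : TV n) : tx n v * Qtv n v * tx n v = Qtv n v := by
  have hx2 : tx n v * tx n v = 1 := tx_mul_tx n v
  rw [Qtv, Qv]
  set c : ℂ := -((Real.pi : ℂ) * Complex.I) / 4 with hc
  set D : TOp n := sx n (starE n v 0) + sx n (starE n v 1)
    - sx n (starE n v 2) - sx n (starE n v 3) with hD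
  set P : TOp n := (2 : ℂ)⁻¹ • ((1 : TOp n) + Av n v) with hP
  set x := tx n v with hx
  set t := tz n v with ht
  have hcommtD : Commute x D :=
    (((comm_tx_sx n v _).add_right (comm_tx_sx n v _)).sub_right
      (comm_tx_sx n v _)).sub_right (comm_tx_sx n v _)
  have hA : x * (t * D) * x = -(t * D) := by
    calc x * (t * D) * x = (x * t) * (D * x) := by simp only [mul_assoc]
      _ = (x * t) * (x * D) := by rw [hcommtD.eq]
      _ = (x * t * x) * D := by simp only [mul_assoc]
      _ = -t * D := by rw [tx_tz_tx_same]
      _ = -(t * D) := by rw [neg_mul]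
  have hconj : ∀ B : TOp n, NormedSpace.exp (x * B * x) = x * NormedSpace.exp B * x :=
    fun B => Matrix.exp_units_conj (⟨x, x, hx2, hx2⟩ : (TOp n)ˣ) B
  have hconjarg : x * (c • (t * D)) * x = (-c) • (t * D) := by
    rw [mul_smul_comm, smul_mul_assoc, hA, smul_neg, ← neg_smul]
  have hxe : x * NormedSpace.exp (c • (t * D)) =
      NormedSpace.exp ((-c) • (t * D)) * x := by
    have h1 := hconj (c • (t * D))
    rw [hconjarg] at h1
    rw [h1, mul_assoc (x * NormedSpace.exp (c • (t * D))) x x, hx2, mul_one]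
  have hcommxP : Commute x P :=
    ((Commute.one_right x).add_right (comm_tx_Av n v v)).smul_right _
  have hPAv : P * Av n v = P := by
    rw [hP, smul_mul_assoc, add_mul, one_mul, Av_mul_Av, add_comm]
  have hsplit : c • (t * D) = ((2 : ℂ) * c) • (t * D) + (-c) • (t * D) := by
    match_scalars; ring
  have hkey : P * NormedSpace.exp (c • (t * D)) =
      P * NormedSpace.exp ((-c) • (t * D)) := by
    conv_lhs => rw [hsplit]
    rw [Matrix.exp_add_of_commute _ _
      (((Commute.refl (t * D)).smul_right _).smul_left _)]
    have hB : NormedSpace.exp (((2 : ℂ) * c) • (t * D)) = Av n v := by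
      rw [hc, hD, ht]
      exact exp_two_smul_Qarg n v
    rw [hB, ← mul_assoc, hPAv]
  calc x * (P * (x * NormedSpace.exp (c • (t * D)))) * x
      = x * (P * (x * (NormedSpace.exp (c • (t * D)) * x))) := by simp only [mul_assoc]
    _ = P * (x * (x * (NormedSpace.exp (c • (t * D)) * x))) := by rw [comm_swap hcommxP]
    _ = P * (NormedSpace.exp (c • (t * D)) * x) := by
        rw [← mul_assoc x x, hx2, one_mul]
    _ = (P * NormedSpace.exp (c • (t * D))) * x := by rw [mul_assoc]
    _ = (P * NormedSpace.exp ((-c) • (t * D))) * x := by rw [hkey]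
    _ = P * (NormedSpace.exp ((-c) • (t * D)) * x) := by rw [mul_assoc]
    _ = P * (x * NormedSpace.exp (c • (t * D))) := by rw [← hxe]


/-! ### Helpers for the plaquette part -/

theorem sxtz_sq (e : TE n) (v : TV n) :
    (sx n e * tz n v) * (sx n e * tz n v) = 1 := by
  rw [invol_pair (comm_tz_sx n v e).eq (sx_mul_sx n e), tz_mul_tz_self]

theorem smul_tz_pair (γ1 γ2 : ℂ) (e e' : TE n) (v : TV n) :
    (γ1 • (sx n e * tz n v)) * (γ2 • (sx n e' * tz n v)) =
      (γ1 • sx n e) * (γ2 • sx n e') := by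
  simp only [smul_mul_assoc, mul_smul_comm, smul_smul]
  congr 1
  calc sx n e * tz n v * (sx n e' * tz n v)
      = sx n e * ((tz n v * sx n e') * tz n v) := by simp only [mul_assoc]
    _ = sx n e * ((sx n e' * tz n v) * tz n v) := by rw [(comm_tz_sx n v e').eq]
    _ = sx n e * (sx n e' * (tz n v * tz n v)) := by simp only [mul_assoc]
    _ = sx n e * sx n e' := by rw [tz_mul_tz_self, mul_one]

theorem comm_sxtz_term (e e' : TE n) (v a b : TV n) :
    Commute (sx n e * tz n v) (sx n e' * (tz n a - tz n b)) :=
  Commute.mul_left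
    ((comm_sx_sx n e e').mul_right ((comm_sx_tz n e a).sub_right (comm_sx_tz n e b)))
    ((comm_tz_sx n v e').mul_right ((comm_tz_tz n v a).sub_right (comm_tz_tz n v b)))

theorem conjN (v : TV n) (e : TE n) (a b : TV n) :
    tx n v * (sx n e * (tz n a - tz n b)) * tx n v =
      sx n e * ((tx n v * tz n a * tx n v) - (tx n v * tz n b * tx n v)) := by
  calc tx n v * (sx n e * (tz n a - tz n b)) * tx n v
      = (tx n v * sx n e) * ((tz n a - tz n b) * tx n v) := by simp only [mul_assoc]
    _ = (sx n e * tx n v) * ((tz n a - tz n b) * tx n v) := by rw [(comm_tx_sx n v e).eq]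
    _ = sx n e * (tx n v * (tz n a - tz n b) * tx n v) := by simp only [mul_assoc]
    _ = sx n e * ((tx n v * tz n a * tx n v) - (tx n v * tz n b * tx n v)) := by
        rw [mul_sub, sub_mul]

theorem master_corner (c : ℂ) (x R1 R2 B Dd W : TOp n) (θ1 θ2 γ1 γ2 : ℂ)
    (hx2 : x * x = 1)
    (hxB : Commute x B)
    (hW : x * (c • W) * x = θ1 • R1 + (θ2 • R2 + c • W))
    (hexp1 : NormedSpace.exp (θ1 • R1) = γ1 • R1)
    (hexp2 : NormedSpace.exp (θ2 • R2) = γ2 • R2)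
    (h12 : Commute R1 R2) (h1W : Commute R1 W) (h2W : Commute R2 W)
    (hD : (γ1 • R1) * (γ2 • R2) = Dd) :
    x * (NormedSpace.exp (c • W) * B) * x = Dd * (NormedSpace.exp (c • W) * B) := by
  have hconjE : x * NormedSpace.exp (c • W) * x = NormedSpace.exp (x * (c • W) * x) :=
    (Matrix.exp_units_conj (⟨x, x, hx2, hx2⟩ : (TOp n)ˣ) (c • W)).symm
  have hsplit : NormedSpace.exp (θ1 • R1 + (θ2 • R2 + c • W)) =
      (γ1 • R1) * ((γ2 • R2) * NormedSpace.exp (c • W)) := by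
    rw [Matrix.exp_add_of_commute _ _
      (((h12.smul_right θ2).add_right (h1W.smul_right c)).smul_left θ1),
      Matrix.exp_add_of_commute _ _ ((h2W.smul_right c).smul_left θ2),
      hexp1, hexp2]
  calc x * (NormedSpace.exp (c • W) * B) * x
      = x * (NormedSpace.exp (c • W) * (B * x)) := by simp only [mul_assoc]
    _ = x * (NormedSpace.exp (c • W) * (x * B)) := by rw [hxB.eq]
    _ = (x * NormedSpace.exp (c • W) * x) * B := by simp only [mul_assoc]
    _ = ((γ1 • R1) * ((γ2 • R2) * NormedSpace.exp (c • W))) * B := by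
        rw [hconjE, hW, hsplit]
    _ = Dd * (NormedSpace.exp (c • W) * B) := by rw [← hD]; simp only [mul_assoc]

theorem d0_b0 (p : TV n) : d0 n (bdryE n p 0) = cnr n p 0 := rfl
theorem d1_b0 (p : TV n) : d1 n (bdryE n p 0) = cnr n p 1 := rfl
theorem d0_b1 (p : TV n) : d0 n (bdryE n p 1) = cnr n p 1 := rfl
theorem d1_b1 (p : TV n) : d1 n (bdryE n p 1) = cnr n p 2 := rfl
theorem d0_b2 (p : TV n) : d0 n (bdryE n p 2) = cnr n p 3 := rfl
theorem d1_b2 (p : TV n) : d1 n (bdryE n p 2) = cnr n p 2 := rfl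
theorem d0_b3 (p : TV n) : d0 n (bdryE n p 3) = cnr n p 0 := rfl
theorem d1_b3 (p : TV n) : d1 n (bdryE n p 3) = cnr n p 3 := rfl

theorem W_eq (p : TV n) :
    (∑ k : Fin 4, sx n (bdryE n p k) *
      (tz n (d1 n (bdryE n p k)) - tz n (d0 n (bdryE n p k)))) =
    sx n (bdryE n p 0) * (tz n (cnr n p 1) - tz n (cnr n p 0)) +
      sx n (bdryE n p 1) * (tz n (cnr n p 2) - tz n (cnr n p 1)) +
      sx n (bdryE n p 2) * (tz n (cnr n p 2) - tz n (cnr n p 3)) +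
      sx n (bdryE n p 3) * (tz n (cnr n p 3) - tz n (cnr n p 0)) := by
  rw [Fin.sum_univ_four, d0_b0, d1_b0, d0_b1, d1_b1, d0_b2, d1_b2, d0_b3, d1_b3]

theorem comm_sxtz_sxtz (e e' : TE n) (v w : TV n) :
    Commute (sx n e * tz n v) (sx n e' * tz n w) :=
  Commute.mul_left
    ((comm_sx_sx n e e').mul_right (comm_sx_tz n e w))
    ((comm_tz_sx n v e').mul_right (comm_tz_tz n v w))


theorem corner1 (hn : 5 ≤ n) (p : TV n) :
    tx n (cnr n p 1) * Btf n p * tx n (cnr n p 1) =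
      (((Complex.I * gsgn n (bdryE n p 0) (cnr n p 1)) • sx n (bdryE n p 0)) *
        ((Complex.I * gsgn n (bdryE n p 1) (cnr n p 1)) • sx n (bdryE n p 1))) * Btf n p := by
  have hone : (1 : ZMod n) ≠ 0 := by
    haveI : Fact (1 < n) := ⟨by omega⟩
    exact one_ne_zero
  have hao : ∀ a : ZMod n, a ≠ a + 1 := fun a h => hone (left_eq_add.mp h)
  have ne01 : cnr n p 0 ≠ cnr n p 1 := fun h => hao p.1 (congrArg Prod.fst h)
  have ne12 : cnr n p 1 ≠ cnr n p 2 := fun h => hao p.2 (congrArg Prod.snd h)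
  have ne13 : cnr n p 1 ≠ cnr n p 3 := fun h => hao p.1 (congrArg Prod.fst h).symm
  have hg0 : gsgn n (bdryE n p 0) (cnr n p 1) = 1 := by
    rw [gsgn, d1_b0, if_pos rfl]
  have hg1 : gsgn n (bdryE n p 1) (cnr n p 1) = -1 := by
    rw [gsgn, d1_b1, if_neg ne12.symm]
  rw [hg0, hg1, mul_one, mul_neg_one, Btf]
  refine master_corner n _ _
    (sx n (bdryE n p 0) * tz n (cnr n p 1)) (sx n (bdryE n p 1) * tz n (cnr n p 1))
    _ _ _ _ _ _ _
    (tx_mul_tx n _) (comm_tx_Bf n _ p) ?_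
    (exp_flip_pos _ (sxtz_sq n (bdryE n p 0) (cnr n p 1)))
    (exp_flip_neg _ (sxtz_sq n (bdryE n p 1) (cnr n p 1)))
    (comm_sxtz_sxtz n _ _ _ _)
    (Commute.sum_right _ _ _ (fun k _ => comm_sxtz_term n _ _ _ _ _))
    (Commute.sum_right _ _ _ (fun k _ => comm_sxtz_term n _ _ _ _ _))
    (smul_tz_pair n Complex.I (-Complex.I) (bdryE n p 0) (bdryE n p 1) (cnr n p 1))
  rw [W_eq]
  rw [mul_smul_comm, smul_mul_assoc]
  simp only [mul_add, add_mul]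
  simp only [conjN]
  rw [tx_tz_tx_same n (cnr n p 1), tx_tz_tx_ne n ne01.symm, tx_tz_tx_ne n ne12,
    tx_tz_tx_ne n ne13]
  simp only [mul_sub, mul_neg]
  module

theorem corner0 (hn : 5 ≤ n) (p : TV n) :
    tx n (cnr n p 0) * Btf n p * tx n (cnr n p 0) =
      (((Complex.I * gsgn n (bdryE n p 3) (cnr n p 0)) • sx n (bdryE n p 3)) *
        ((Complex.I * gsgn n (bdryE n p 0) (cnr n p 0)) • sx n (bdryE n p 0))) * Btf n p := by
  have hone : (1 : ZMod n) ≠ 0 := by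
    haveI : Fact (1 < n) := ⟨by omega⟩
    exact one_ne_zero
  have hao : ∀ a : ZMod n, a ≠ a + 1 := fun a h => hone (left_eq_add.mp h)
  have ne01 : cnr n p 0 ≠ cnr n p 1 := fun h => hao p.1 (congrArg Prod.fst h)
  have ne02 : cnr n p 0 ≠ cnr n p 2 := fun h => hao p.1 (congrArg Prod.fst h)
  have ne03 : cnr n p 0 ≠ cnr n p 3 := fun h => hao p.2 (congrArg Prod.snd h)
  have hg3 : gsgn n (bdryE n p 3) (cnr n p 0) = -1 := by
    rw [gsgn, d1_b3, if_neg ne03.symm]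
  have hg0 : gsgn n (bdryE n p 0) (cnr n p 0) = -1 := by
    rw [gsgn, d1_b0, if_neg ne01.symm]
  rw [hg3, hg0, mul_neg_one, Btf]
  refine master_corner n _ _
    (sx n (bdryE n p 3) * tz n (cnr n p 0)) (sx n (bdryE n p 0) * tz n (cnr n p 0))
    _ _ _ _ _ _ _
    (tx_mul_tx n _) (comm_tx_Bf n _ p) ?_
    (exp_flip_neg _ (sxtz_sq n (bdryE n p 3) (cnr n p 0)))
    (exp_flip_neg _ (sxtz_sq n (bdryE n p 0) (cnr n p 0)))
    (comm_sxtz_sxtz n _ _ _ _)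
    (Commute.sum_right _ _ _ (fun k _ => comm_sxtz_term n _ _ _ _ _))
    (Commute.sum_right _ _ _ (fun k _ => comm_sxtz_term n _ _ _ _ _))
    (smul_tz_pair n (-Complex.I) (-Complex.I) (bdryE n p 3) (bdryE n p 0) (cnr n p 0))
  rw [W_eq]
  rw [mul_smul_comm, smul_mul_assoc]
  simp only [mul_add, add_mul]
  simp only [conjN]
  rw [tx_tz_tx_same n (cnr n p 0), tx_tz_tx_ne n ne01, tx_tz_tx_ne n ne02,
    tx_tz_tx_ne n ne03]
  simp only [mul_sub, mul_neg]
  module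

theorem corner2 (hn : 5 ≤ n) (p : TV n) :
    tx n (cnr n p 2) * Btf n p * tx n (cnr n p 2) =
      (((Complex.I * gsgn n (bdryE n p 1) (cnr n p 2)) • sx n (bdryE n p 1)) *
        ((Complex.I * gsgn n (bdryE n p 2) (cnr n p 2)) • sx n (bdryE n p 2))) * Btf n p := by
  have hone : (1 : ZMod n) ≠ 0 := by
    haveI : Fact (1 < n) := ⟨by omega⟩
    exact one_ne_zero
  have hao : ∀ a : ZMod n, a ≠ a + 1 := fun a h => hone (left_eq_add.mp h)
  have ne02 : cnr n p 0 ≠ cnr n p 2 := fun h => hao p.1 (congrArg Prod.fst h)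
  have ne12 : cnr n p 1 ≠ cnr n p 2 := fun h => hao p.2 (congrArg Prod.snd h)
  have ne23 : cnr n p 2 ≠ cnr n p 3 := fun h => hao p.1 (congrArg Prod.fst h).symm
  have hg1 : gsgn n (bdryE n p 1) (cnr n p 2) = 1 := by
    rw [gsgn, d1_b1, if_pos rfl]
  have hg2 : gsgn n (bdryE n p 2) (cnr n p 2) = 1 := by
    rw [gsgn, d1_b2, if_pos rfl]
  rw [hg1, hg2, mul_one, Btf]
  refine master_corner n _ _
    (sx n (bdryE n p 1) * tz n (cnr n p 2)) (sx n (bdryE n p 2) * tz n (cnr n p 2))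
    _ _ _ _ _ _ _
    (tx_mul_tx n _) (comm_tx_Bf n _ p) ?_
    (exp_flip_pos _ (sxtz_sq n (bdryE n p 1) (cnr n p 2)))
    (exp_flip_pos _ (sxtz_sq n (bdryE n p 2) (cnr n p 2)))
    (comm_sxtz_sxtz n _ _ _ _)
    (Commute.sum_right _ _ _ (fun k _ => comm_sxtz_term n _ _ _ _ _))
    (Commute.sum_right _ _ _ (fun k _ => comm_sxtz_term n _ _ _ _ _))
    (smul_tz_pair n Complex.I Complex.I (bdryE n p 1) (bdryE n p 2) (cnr n p 2))
  rw [W_eq]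
  rw [mul_smul_comm, smul_mul_assoc]
  simp only [mul_add, add_mul]
  simp only [conjN]
  rw [tx_tz_tx_same n (cnr n p 2), tx_tz_tx_ne n ne12.symm, tx_tz_tx_ne n ne02.symm,
    tx_tz_tx_ne n ne23]
  simp only [mul_sub, mul_neg]
  module

theorem corner3 (hn : 5 ≤ n) (p : TV n) :
    tx n (cnr n p 3) * Btf n p * tx n (cnr n p 3) =
      (((Complex.I * gsgn n (bdryE n p 2) (cnr n p 3)) • sx n (bdryE n p 2)) *
        ((Complex.I * gsgn n (bdryE n p 3) (cnr n p 3)) • sx n (bdryE n p 3))) * Btf n p := by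
  have hone : (1 : ZMod n) ≠ 0 := by
    haveI : Fact (1 < n) := ⟨by omega⟩
    exact one_ne_zero
  have hao : ∀ a : ZMod n, a ≠ a + 1 := fun a h => hone (left_eq_add.mp h)
  have ne03 : cnr n p 0 ≠ cnr n p 3 := fun h => hao p.2 (congrArg Prod.snd h)
  have ne13 : cnr n p 1 ≠ cnr n p 3 := fun h => hao p.1 (congrArg Prod.fst h).symm
  have ne23 : cnr n p 2 ≠ cnr n p 3 := fun h => hao p.1 (congrArg Prod.fst h).symm
  have hg2 : gsgn n (bdryE n p 2) (cnr n p 3) = -1 := by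
    rw [gsgn, d1_b2, if_neg ne23]
  have hg3 : gsgn n (bdryE n p 3) (cnr n p 3) = 1 := by
    rw [gsgn, d1_b3, if_pos rfl]
  rw [hg2, hg3, mul_neg_one, mul_one, Btf]
  refine master_corner n _ _
    (sx n (bdryE n p 2) * tz n (cnr n p 3)) (sx n (bdryE n p 3) * tz n (cnr n p 3))
    _ _ _ _ _ _ _
    (tx_mul_tx n _) (comm_tx_Bf n _ p) ?_
    (exp_flip_neg _ (sxtz_sq n (bdryE n p 2) (cnr n p 3)))
    (exp_flip_pos _ (sxtz_sq n (bdryE n p 3) (cnr n p 3)))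
    (comm_sxtz_sxtz n _ _ _ _)
    (Commute.sum_right _ _ _ (fun k _ => comm_sxtz_term n _ _ _ _ _))
    (Commute.sum_right _ _ _ (fun k _ => comm_sxtz_term n _ _ _ _ _))
    (smul_tz_pair n (-Complex.I) Complex.I (bdryE n p 2) (bdryE n p 3) (cnr n p 3))
  rw [W_eq]
  rw [mul_smul_comm, smul_mul_assoc]
  simp only [mul_add, add_mul]
  simp only [conjN]
  rw [tx_tz_tx_same n (cnr n p 3), tx_tz_tx_ne n ne03.symm, tx_tz_tx_ne n ne13.symm,
    tx_tz_tx_ne n ne23.symm]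
  simp only [mul_sub, mul_neg]
  module

theorem comm_tx_Qtv (w v : TV n) : Commute (tx n w) (Qtv n v) := by
  rcases eq_or_ne w v with rfl | h
  · have h2 := tx_Qtv_tx n w
    show tx n w * Qtv n w = Qtv n w * tx n w
    calc tx n w * Qtv n w = tx n w * Qtv n w * (tx n w * tx n w) := by
          rw [tx_mul_tx, mul_one]
      _ = (tx n w * Qtv n w * tx n w) * tx n w := by simp only [mul_assoc]
      _ = Qtv n w * tx n w := by rw [h2]
  · rw [Qtv, Qv]
    have hargs : Commute (tx n w)
        ((-((Real.pi : ℂ) * Complex.I) / 4) •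
          (tz n v * (sx n (starE n v 0) + sx n (starE n v 1)
            - sx n (starE n v 2) - sx n (starE n v 3)))) :=
      ((comm_tx_tz_ne n h).mul_right
        ((((comm_tx_sx n w _).add_right (comm_tx_sx n w _)).sub_right
          (comm_tx_sx n w _)).sub_right (comm_tx_sx n w _))).smul_right _
    exact (((Commute.one_right _).add_right (comm_tx_Av n w v)).smul_right _).mul_right
      ((comm_tx_tx n w v).mul_right (Commute.exp_right hargs))


/-- **restricted symmetry action on the modified plaquette operator.**
For every face `f` and every subset `S` of its corner vertices,
`(∏_{v∈S} τ^x_v) · 𝑩̃_f · (∏_{v∈S} τ^x_v) = (∏_{v∈S} ∏_{e∈f, e∋v} i·g(e,v)·σ^x_e) · 𝑩̃_f`,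
where `g(e,v) = +1` if `v = ∂₁e` and `g(e,v) = −1` if `v = ∂₀e`.  Moreover
`τ^x_v·𝑸̃_v·τ^x_v = 𝑸̃_v` and the `τ^x`'s commute with `A_v`, so a symmetry action
restricted to any subset of vertex qubits fixes all `A_v` and `𝑸̃_v`. -/
theorem restricted_symmetry_on_modified_plaquette (hn : 5 ≤ n) :
    (∀ (f : TV n) (S : Finset (Fin 4)),
        GfaceS n f S * Btf n f * GfaceS n f S = decoration n f S * Btf n f) ∧
      (∀ v : TV n, tx n v * Qtv n v * tx n v = Qtv n v) ∧
      (∀ (l : List (TV n)) (v : TV n),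
        Commute ((l.map (tx n)).prod) (Av n v) ∧
          Commute ((l.map (tx n)).prod) (Qtv n v)) := by
  refine ⟨?_, fun v => tx_Qtv_tx n v, ?_⟩
  · intro f S
    rw [GfaceS, decoration]
    refine conj_list (fun j => tx n (cnr n f j))
      (fun j => ((Complex.I * gsgn n (bdryE n f (j - 1)) (cnr n f j)) • sx n (bdryE n f (j - 1))) *
        ((Complex.I * gsgn n (bdryE n f j) (cnr n f j)) • sx n (bdryE n f j)))
      (Btf n f) (fun i j => comm_tx_tx n _ _)
      (fun i j => ((comm_tx_sx n _ _).smul_right _).mul_right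
        ((comm_tx_sx n _ _).smul_right _))
      (fun i j => Commute.mul_left
        ((((comm_sx_sx n _ _).smul_left _).smul_right _).mul_right
          (((comm_sx_sx n _ _).smul_left _).smul_right _))
        ((((comm_sx_sx n _ _).smul_left _).smul_right _).mul_right
          (((comm_sx_sx n _ _).smul_left _).smul_right _)))
      ?_ _
    intro j
    fin_cases j
    · exact corner0 n hn f
    · exact corner1 n hn f
    · exact corner2 n hn f
    · exact corner3 n hn f
  · intro l v
    constructor
    · exact Commute.list_prod_left _ _ (fun y hy => by
        obtain ⟨w, _, rfl⟩ := List.mem_map.1 hy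
        exact comm_tx_Av n w v)
    · exact Commute.list_prod_left _ _ (fun y hy => by
        obtain ⟨w, _, rfl⟩ := List.mem_map.1 hy
        exact comm_tx_Qtv n w v)


end
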